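/- arXiv:2408.09938 — 4 statements merged into one kernel-verified Lean document; each statement's English description precedes it below -/
import Mathlib

section
/- Let A ∈ {0,*}^{n×n} and let B ∈ {0,*}^{n×q} be a dedicated input pattern. Consider dedicated sensors that may measure either a state or an input, i.e., output/feedthrough patterns (C,D) ∈ {0,*}^{m×n} × {0,*}^{m×q} in which every row of the compound pattern [C D] has exactly one free entry. Then the minimum number of such dedicated sensors making (A,B,C,D) GSIO lies in the integer interval [H(A), H(A)+q], where H(A) is the minimum number of dedicated sensors making the pair (A,C) structurally observable. -/
/-- The realization of a structured pattern (a set of free positions) determined by an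
assignment `v` of complex values to its free entries: the matrix vanishes outside the
free positions. -/
def Pattern.realize {a b : Type*} [DecidableEq a] [DecidableEq b] (P : Finset (a × b))
    (v : {e // e ∈ P} → ℂ) : Matrix a b ℂ :=
  Matrix.of fun i j => if h : (i, j) ∈ P then v ⟨(i, j), h⟩ else 0

/-- The structured pair `(M, C)` is structurally observable: there is a nonzero
polynomial in the free entries such that every realization at which it does not vanish
has `[M̃ - s I; C̃]` of full column rank for every `s ∈ ℂ`. -/
def IsStructObs {ι : Type*} [Fintype ι] [DecidableEq ι] {m : ℕ}
    (M : Finset (ι × ι)) (C : Finset (Fin m × ι)) : Prop :=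
  ∃ p : MvPolynomial ({e // e ∈ M} ⊕ {e // e ∈ C}) ℂ, p ≠ 0 ∧
    ∀ v : ({e // e ∈ M} ⊕ {e // e ∈ C}) → ℂ,
      MvPolynomial.eval v p ≠ 0 → ∀ s : ℂ,
        (Matrix.fromRows
            (Pattern.realize M (fun e => v (Sum.inl e)) - s • (1 : Matrix ι ι ℂ))
            (Pattern.realize C (fun e => v (Sum.inr e)))).rank = Fintype.card ι

/-- `Hmin M` is the minimum number of dedicated sensors (rows each having exactly one
free entry) in an output pattern `C` making the pair `(M, C)` structurally observable. -/
noncomputable def Hmin {ι : Type*} [Fintype ι] [DecidableEq ι] (M : Finset (ι × ι)) : ℕ :=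
  sInf {k : ℕ | ∃ C : Finset (Fin k × ι),
    (∀ i : Fin k, ∃! j : ι, (i, j) ∈ C) ∧ IsStructObs M C}

/-- The structured system `(A, B, C, D)` is generically state and input observable
(GSIO), where the output/feedthrough patterns are encoded by a single compound pattern
`CD` on columns `Fin n ⊕ Fin q` (state columns and input columns): there is a nonzero
polynomial in the free entries such that every realization at which it does not vanish
has a Rosenbrock matrix `[[Ã - s I, B̃], [C̃, D̃]]` of full column rank `n + q` for every
`s ∈ ℂ`. -/
def IsGSIOD {n q m : ℕ} (A : Finset (Fin n × Fin n)) (B : Finset (Fin n × Fin q))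
    (CD : Finset (Fin m × (Fin n ⊕ Fin q))) : Prop :=
  ∃ p : MvPolynomial (({e // e ∈ A} ⊕ {e // e ∈ B}) ⊕ {e // e ∈ CD}) ℂ, p ≠ 0 ∧
    ∀ v : (({e // e ∈ A} ⊕ {e // e ∈ B}) ⊕ {e // e ∈ CD}) → ℂ,
      MvPolynomial.eval v p ≠ 0 → ∀ s : ℂ,
        (Matrix.fromBlocks
            (Pattern.realize A (fun e => v (Sum.inl (Sum.inl e))) -
              s • (1 : Matrix (Fin n) (Fin n) ℂ))
            (Pattern.realize B (fun e => v (Sum.inl (Sum.inr e))))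
            (Matrix.of fun i j =>
              Pattern.realize CD (fun e => v (Sum.inr e)) i (Sum.inl j))
            (Matrix.of fun i j =>
              Pattern.realize CD (fun e => v (Sum.inr e)) i (Sum.inr j))).rank = n + q


section Aux
open Matrix

lemma rank_eq_card_iff' {m' n' : Type*} [Fintype m'] [Fintype n'] (M : Matrix m' n' ℂ) :
    M.rank = Fintype.card n' ↔ ∀ x : n' → ℂ, M.mulVec x = 0 → x = 0 := by
  have h1 := LinearMap.finrank_range_add_finrank_ker M.mulVecLin
  have h2 : Module.finrank ℂ (n' → ℂ) = Fintype.card n' := Module.finrank_pi ℂ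
  rw [h2] at h1
  have hrk : M.rank = Module.finrank ℂ (LinearMap.range M.mulVecLin) := rfl
  constructor
  · intro h x hx
    have hker : Module.finrank ℂ (LinearMap.ker M.mulVecLin) = 0 := by omega
    have hbot : LinearMap.ker M.mulVecLin = ⊥ := Submodule.finrank_eq_zero.mp hker
    have hx' : x ∈ LinearMap.ker M.mulVecLin := by
      simpa [LinearMap.mem_ker, Matrix.mulVecLin_apply] using hx
    simpa [hbot] using hx'
  · intro h
    have hbot : LinearMap.ker M.mulVecLin = ⊥ := by
      ext x
      simp only [LinearMap.mem_ker, Matrix.mulVecLin_apply, Submodule.mem_bot]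
      exact ⟨h x, fun hx => by rw [hx, Matrix.mulVec_zero]⟩
    rw [hbot] at h1; simp only [finrank_bot] at h1
    omega

lemma row_single {κ ι : Type*} [Fintype ι] [DecidableEq ι] (N : Matrix κ ι ℂ) (i : κ)
    (j0 : ι) (c : ℂ) (h : ∀ j, N i j = if j = j0 then c else 0) (x : ι → ℂ) :
    (N *ᵥ x) i = c * x j0 := by
  unfold Matrix.mulVec dotProduct
  simp only [h, ite_mul, zero_mul]
  rw [Finset.sum_ite_eq' Finset.univ j0 (fun j => c * x j)]
  simp

lemma row_zero {κ ι : Type*} [Fintype ι] (N : Matrix κ ι ℂ) (i : κ)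
    (h : ∀ j, N i j = 0) (x : ι → ℂ) : (N *ᵥ x) i = 0 := by
  unfold Matrix.mulVec dotProduct
  simp only [h, zero_mul]
  exact Finset.sum_const_zero

lemma mem_image_dedicated {k : ℕ} {α : Type*} [DecidableEq α] (σ : Fin k → α) (i : Fin k)
    (c : α) : (i, c) ∈ Finset.image (fun r => (r, σ r)) Finset.univ ↔ c = σ i := by
  simp only [Finset.mem_image, Finset.mem_univ, true_and, Prod.mk.injEq]
  constructor
  · rintro ⟨a, rfl, h⟩; exact h.symm
  · rintro rfl; exact ⟨i, rfl, rfl⟩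

lemma realize_row {k : ℕ} {ι : Type*} [Fintype ι] [DecidableEq ι] (P : Finset (Fin k × ι))
    (gg : Fin k → ι) (hP : ∀ i c, (i, c) ∈ P ↔ c = gg i) (v : {e // e ∈ P} → ℂ)
    (i : Fin k) (j : ι) :
    Pattern.realize P v i j = if j = gg i then v ⟨(i, gg i), (hP i (gg i)).mpr rfl⟩ else 0 := by
  unfold Pattern.realize
  by_cases hj : j = gg i
  · rw [Matrix.of_apply, if_pos hj, dif_pos ((hP i j).mpr hj)]
    exact congrArg v (Subtype.ext (by simp [hj]))
  · rw [Matrix.of_apply, dif_neg (fun hm => hj ((hP i j).mp hm)), if_neg hj]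

lemma aux_obs_baseline (n : ℕ) (A : Finset (Fin n × Fin n)) :
    ∃ C : Finset (Fin n × Fin n), (∀ i : Fin n, ∃! j : Fin n, (i, j) ∈ C) ∧ IsStructObs A C := by
  classical
  set C : Finset (Fin n × Fin n) := Finset.image (fun r => (r, r)) Finset.univ with hCdef
  have hmem : ∀ i j : Fin n, (i, j) ∈ C ↔ j = id i := fun i j => mem_image_dedicated id i j
  refine ⟨C, fun i => ⟨i, (hmem i i).mpr rfl, fun j hj => (hmem i j).mp hj⟩, ?_⟩
  refine ⟨∏ i : Fin n, MvPolynomial.X (Sum.inr ⟨(i, i), (hmem i i).mpr rfl⟩), ?_, ?_⟩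
  · exact Finset.prod_ne_zero_iff.mpr fun i _ => MvPolynomial.X_ne_zero _
  · intro v hv s
    simp only [map_prod, MvPolynomial.eval_X] at hv
    have hv' : ∀ i : Fin n, v (Sum.inr ⟨(i, i), (hmem i i).mpr rfl⟩) ≠ 0 :=
      fun i h0 => hv (Finset.prod_eq_zero (Finset.mem_univ i) h0)
    rw [rank_eq_card_iff']
    intro x hx
    rw [Matrix.fromRows_mulVec] at hx
    funext j
    have hrow := congrFun hx (Sum.inr j)
    have hsingle : (Pattern.realize C (fun e => v (Sum.inr e)) *ᵥ x) j
        = v (Sum.inr ⟨(j, j), (hmem j j).mpr rfl⟩) * x j := by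
      refine row_single _ j j _ (fun j' => ?_) x
      exact realize_row C id hmem (fun e => v (Sum.inr e)) j j'
    have : v (Sum.inr ⟨(j, j), (hmem j j).mpr rfl⟩) * x j = 0 := by
      rw [← hsingle]; exact hrow
    have := (mul_eq_zero.mp this).resolve_left (hv' j)
    simpa using this

lemma aux_gsio_of_obs {n q h : ℕ} (A : Finset (Fin n × Fin n)) (B : Finset (Fin n × Fin q))
    (C : Finset (Fin h × Fin n)) (hded : ∀ i : Fin h, ∃! j : Fin n, (i, j) ∈ C)
    (hobs : IsStructObs A C) :
    ∃ CD : Finset (Fin (h + q) × (Fin n ⊕ Fin q)),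
      (∀ i : Fin (h + q), ∃! c : Fin n ⊕ Fin q, (i, c) ∈ CD) ∧ IsGSIOD A B CD := by
  classical
  obtain ⟨p0, hp00, hp0c⟩ := hobs
  choose γ hγ hγu using hded
  have hmemC : ∀ (i : Fin h) (j : Fin n), (i, j) ∈ C ↔ j = γ i :=
    fun i j => ⟨fun hm => hγu i j hm, fun hj => hj ▸ hγ i⟩
  -- the unique free column of each sensor row
  set σCD : Fin (h + q) → (Fin n ⊕ Fin q) :=
    Fin.addCases (fun i => Sum.inl (γ i)) (fun t => Sum.inr t) with hσdef
  set CD : Finset (Fin (h + q) × (Fin n ⊕ Fin q)) :=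
    Finset.image (fun r => (r, σCD r)) Finset.univ with hCDdef
  have hmemCD : ∀ r c, (r, c) ∈ CD ↔ c = σCD r := fun r c => mem_image_dedicated σCD r c
  have hσCast : ∀ i : Fin h, σCD (Fin.castAdd q i) = Sum.inl (γ i) := by
    intro i; rw [hσdef]; exact Fin.addCases_left i
  have hσNat : ∀ t : Fin q, σCD (Fin.natAdd h t) = Sum.inr t := by
    intro t; rw [hσdef]; exact Fin.addCases_right t
  refine ⟨CD, fun i => ⟨σCD i, (hmemCD i _).mpr rfl, fun c hc => (hmemCD i c).mp hc⟩, ?_⟩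
  -- the variable renaming
  set ρ : ({e // e ∈ A} ⊕ {e // e ∈ C}) →
      (({e // e ∈ A} ⊕ {e // e ∈ B}) ⊕ {e // e ∈ CD}) := fun x =>
    match x with
    | Sum.inl a => Sum.inl (Sum.inl a)
    | Sum.inr c => Sum.inr ⟨(Fin.castAdd q c.1.1, Sum.inl c.1.2),
        (hmemCD _ _).mpr (by
          rw [hσCast c.1.1]
          exact congrArg Sum.inl (hγu c.1.1 c.1.2 c.2))⟩
    with hρdef
  have hρinj : Function.Injective ρ := by
    intro x y hxy
    match x, y with
    | Sum.inl a, Sum.inl b =>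
      simp only [hρdef, Sum.inl.injEq] at hxy
      exact congrArg Sum.inl hxy
    | Sum.inl a, Sum.inr c => simp [hρdef] at hxy
    | Sum.inr c, Sum.inl a => simp [hρdef] at hxy
    | Sum.inr c, Sum.inr c' =>
      simp only [hρdef, Sum.inr.injEq, Subtype.mk.injEq, Prod.mk.injEq] at hxy
      obtain ⟨h1, h2⟩ := hxy
      have hr : c.1.1 = c'.1.1 := by
        have := congrArg (fun z : Fin (h + q) => (z : ℕ)) h1
        exact Fin.ext (by simpa using this)
      have hc : c.1.2 = c'.1.2 := by simpa using h2
      congr 1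
      exact Subtype.ext (Prod.ext hr hc)
  refine ⟨MvPolynomial.rename ρ p0 *
      ∏ t : Fin q, MvPolynomial.X (Sum.inr ⟨(Fin.natAdd h t, Sum.inr t),
        (hmemCD _ _).mpr (hσNat t).symm⟩), ?_, ?_⟩
  · refine mul_ne_zero ?_ ?_
    · intro hz
      exact hp00 ((MvPolynomial.rename_injective ρ hρinj) (by rw [hz, map_zero]))
    · exact Finset.prod_ne_zero_iff.mpr fun t _ => MvPolynomial.X_ne_zero _
  · intro v hv s
    rw [_root_.map_mul, MvPolynomial.eval_rename] at hv
    have hv1 : MvPolynomial.eval (v ∘ ρ) p0 ≠ 0 := left_ne_zero_of_mul hv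
    have hv2 := right_ne_zero_of_mul hv
    simp only [map_prod, MvPolynomial.eval_X] at hv2
    have hvd : ∀ t : Fin q, v (Sum.inr ⟨(Fin.natAdd h t, Sum.inr t),
        (hmemCD _ _).mpr (hσNat t).symm⟩) ≠ 0 :=
      fun t h0 => hv2 (Finset.prod_eq_zero (Finset.mem_univ t) h0)
    have hcard : n + q = Fintype.card (Fin n ⊕ Fin q) := by simp
    rw [hcard, rank_eq_card_iff']
    intro y hy
    rw [Matrix.fromBlocks_mulVec] at hy
    have htop : ∀ i : Fin n,
        ((Pattern.realize A (fun e => v (Sum.inl (Sum.inl e))) -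
            s • (1 : Matrix (Fin n) (Fin n) ℂ)) *ᵥ (y ∘ Sum.inl) +
          (Pattern.realize B (fun e => v (Sum.inl (Sum.inr e)))) *ᵥ (y ∘ Sum.inr)) i = 0 :=
      fun i => congrFun hy (Sum.inl i)
    have hbot : ∀ r : Fin (h + q),
        ((Matrix.of fun i j => Pattern.realize CD (fun e => v (Sum.inr e)) i (Sum.inl j))
            *ᵥ (y ∘ Sum.inl) +
          (Matrix.of fun i j => Pattern.realize CD (fun e => v (Sum.inr e)) i (Sum.inr j))
            *ᵥ (y ∘ Sum.inr)) r = 0 :=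
      fun r => congrFun hy (Sum.inr r)
    -- first: the input part of y vanishes
    have hu : (y ∘ Sum.inr) = 0 := by
      funext t
      have h1 := hbot (Fin.natAdd h t)
      have hcb : ((Matrix.of fun i j =>
          Pattern.realize CD (fun e => v (Sum.inr e)) i (Sum.inl j)) *ᵥ (y ∘ Sum.inl))
          (Fin.natAdd h t) = 0 := by
        refine row_zero _ _ (fun j => ?_) _
        have hthis := realize_row CD σCD hmemCD (fun e => v (Sum.inr e)) (Fin.natAdd h t)
          (Sum.inl j)
        have hne : ¬ (Sum.inl j = σCD (Fin.natAdd h t)) := by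
          rw [hσNat t]; exact fun hcon => Sum.inl_ne_inr hcon
        rw [Matrix.of_apply, hthis, if_neg hne]
      have hdb : ((Matrix.of fun i j =>
          Pattern.realize CD (fun e => v (Sum.inr e)) i (Sum.inr j)) *ᵥ (y ∘ Sum.inr))
          (Fin.natAdd h t) = v (Sum.inr ⟨(Fin.natAdd h t, Sum.inr t),
            (hmemCD _ _).mpr (hσNat t).symm⟩) * (y ∘ Sum.inr) t := by
        refine row_single _ _ t _ (fun t' => ?_) _
        have hthis := realize_row CD σCD hmemCD (fun e => v (Sum.inr e)) (Fin.natAdd h t)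
          (Sum.inr t')
        by_cases ht' : t' = t
        · subst ht'
          have hc : Sum.inr t' = σCD (Fin.natAdd h t') := (hσNat t').symm
          rw [Matrix.of_apply, hthis, if_pos hc, if_pos rfl]
          refine congrArg (fun e => v (Sum.inr e)) (Subtype.ext ?_)
          show ((Fin.natAdd h t' : Fin (h + q)), σCD (Fin.natAdd h t'))
            = ((Fin.natAdd h t' : Fin (h + q)), Sum.inr t')
          exact congrArg (Prod.mk _) (hσNat t')
        · have hne : ¬ (Sum.inr t' = σCD (Fin.natAdd h t)) := by
            rw [hσNat t]; exact fun hcon => ht' (by injection hcon)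
          rw [Matrix.of_apply, hthis, if_neg hne, if_neg ht']
      rw [Pi.add_apply, hcb, hdb, zero_add] at h1
      exact (mul_eq_zero.mp h1).resolve_left (hvd t)
    -- then: the state part of y vanishes, by structural observability
    have hobs := hp0c (v ∘ ρ) hv1 s
    rw [rank_eq_card_iff'] at hobs
    have hx : (y ∘ Sum.inl) = 0 := by
      apply hobs
      rw [Matrix.fromRows_mulVec]
      funext r
      match r with
      | Sum.inl i =>
        have := htop i
        rw [hu, Matrix.mulVec_zero, add_zero] at this
        exact this
      | Sum.inr i =>
        show (Pattern.realize C (fun e => (v ∘ ρ) (Sum.inr e)) *ᵥ (y ∘ Sum.inl)) i = 0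
        have h1 := hbot (Fin.castAdd q i)
        have hdbz : ((Matrix.of fun i j =>
            Pattern.realize CD (fun e => v (Sum.inr e)) i (Sum.inr j)) *ᵥ (y ∘ Sum.inr))
            (Fin.castAdd q i) = 0 := by
          refine row_zero _ _ (fun t' => ?_) _
          have hthis := realize_row CD σCD hmemCD (fun e => v (Sum.inr e)) (Fin.castAdd q i)
            (Sum.inr t')
          have hne : ¬ (Sum.inr t' = σCD (Fin.castAdd q i)) := by
            rw [hσCast i]; exact fun hcon => Sum.inr_ne_inl hcon
          rw [Matrix.of_apply, hthis, if_neg hne]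
        have hcbs : ((Matrix.of fun i j =>
            Pattern.realize CD (fun e => v (Sum.inr e)) i (Sum.inl j)) *ᵥ (y ∘ Sum.inl))
            (Fin.castAdd q i)
            = v (ρ (Sum.inr ⟨(i, γ i), hγ i⟩)) * (y ∘ Sum.inl) (γ i) := by
          refine row_single _ _ (γ i) _ (fun j => ?_) _
          have hthis := realize_row CD σCD hmemCD (fun e => v (Sum.inr e)) (Fin.castAdd q i)
            (Sum.inl j)
          by_cases hj : j = γ i
          · have hc : Sum.inl j = σCD (Fin.castAdd q i) := by rw [hσCast i, hj]
            rw [Matrix.of_apply, hthis, if_pos hc, if_pos hj]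
            refine congrArg v (congrArg Sum.inr (Subtype.ext ?_))
            show ((Fin.castAdd q i : Fin (h + q)), σCD (Fin.castAdd q i))
              = ((Fin.castAdd q i : Fin (h + q)), Sum.inl (γ i))
            exact congrArg (Prod.mk _) (hσCast i)
          · have hne : ¬ (Sum.inl j = σCD (Fin.castAdd q i)) := by
              rw [hσCast i]; exact fun hcon => hj (by injection hcon)
            rw [Matrix.of_apply, hthis, if_neg hne, if_neg hj]
        rw [Pi.add_apply, hdbz, hcbs, add_zero] at h1
        have hrow := row_single (Pattern.realize C (fun e => (v ∘ ρ) (Sum.inr e))) i (γ i)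
          (v (ρ (Sum.inr ⟨(i, γ i), hγ i⟩)))
          (fun j => by
            rw [realize_row C γ hmemC (fun e => (v ∘ ρ) (Sum.inr e)) i j]
            rfl) (y ∘ Sum.inl)
        rw [hrow]
        exact h1
    funext c
    match c with
    | Sum.inl j => exact congrFun hx j
    | Sum.inr t => exact congrFun hu t

lemma aux_obs_of_gsio {n q k : ℕ} (A : Finset (Fin n × Fin n)) (B : Finset (Fin n × Fin q))
    (f : Fin q → Fin n) (CD : Finset (Fin k × (Fin n ⊕ Fin q)))
    (hded : ∀ i : Fin k, ∃! c : Fin n ⊕ Fin q, (i, c) ∈ CD)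
    (hg : IsGSIOD A B CD) :
    ∃ C : Finset (Fin k × Fin n), (∀ i : Fin k, ∃! j : Fin n, (i, j) ∈ C) ∧ IsStructObs A C := by
  classical
  obtain ⟨p, hp0, hp⟩ := hg
  choose σ hσ hσu using hded
  set g : Fin k → Fin n := fun i => Sum.elim id f (σ i) with hgdef
  set C : Finset (Fin k × Fin n) := Finset.image (fun r => (r, g r)) Finset.univ with hCdef
  have hmemC : ∀ i j, (i, j) ∈ C ↔ j = g i := fun i j => mem_image_dedicated g i j
  -- substitution of the B-variables by constants b0, and CD-variables by C-variables
  set θ : ({e // e ∈ B} → ℂ) →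
      ((({e // e ∈ A} ⊕ {e // e ∈ B}) ⊕ {e // e ∈ CD}) →
        MvPolynomial ({e // e ∈ A} ⊕ {e // e ∈ C}) ℂ) := fun b0 x =>
    match x with
    | Sum.inl (Sum.inl a) => MvPolynomial.X (Sum.inl a)
    | Sum.inl (Sum.inr b) => MvPolynomial.C (b0 b)
    | Sum.inr cd => MvPolynomial.X (Sum.inr ⟨(cd.1.1, g cd.1.1), (hmemC _ _).mpr rfl⟩)
    with hθdef
  set W : ({e // e ∈ B} → ℂ) → (({e // e ∈ A} ⊕ {e // e ∈ C}) → ℂ) →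
      ((({e // e ∈ A} ⊕ {e // e ∈ B}) ⊕ {e // e ∈ CD}) → ℂ) := fun b0 v' x =>
    match x with
    | Sum.inl (Sum.inl a) => v' (Sum.inl a)
    | Sum.inl (Sum.inr b) => b0 b
    | Sum.inr cd => v' (Sum.inr ⟨(cd.1.1, g cd.1.1), (hmemC _ _).mpr rfl⟩)
    with hWdef
  have keyeval : ∀ b0 v', MvPolynomial.eval v' (MvPolynomial.eval₂ MvPolynomial.C (θ b0) p)
      = MvPolynomial.eval (W b0 v') p := by
    intro b0 v'
    rw [← MvPolynomial.eval_assoc]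
    have harg : ⇑(MvPolynomial.eval v') ∘ θ b0 = W b0 v' := by
      funext x
      match x with
      | Sum.inl (Sum.inl a) => simp [hθdef, hWdef]
      | Sum.inl (Sum.inr b) => simp [hθdef, hWdef]
      | Sum.inr cd => simp [hθdef, hWdef]
    rw [harg]
  -- choose constants b0 keeping the polynomial nonzero
  have hb0 : ∃ b0, MvPolynomial.eval₂ MvPolynomial.C (θ b0) p ≠ 0 := by
    by_contra hcon
    push_neg at hcon
    apply hp0
    apply MvPolynomial.funext (q := 0)
    intro w
    rw [map_zero]
    set b0w : {e // e ∈ B} → ℂ := fun b => w (Sum.inl (Sum.inr b)) with hb0w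
    set v'w : ({e // e ∈ A} ⊕ {e // e ∈ C}) → ℂ := fun x =>
      match x with
      | Sum.inl a => w (Sum.inl (Sum.inl a))
      | Sum.inr c => w (Sum.inr ⟨(c.1.1, σ c.1.1), hσ c.1.1⟩) with hv'w
    have hww : W b0w v'w = w := by
      funext x
      match x with
      | Sum.inl (Sum.inl a) => rfl
      | Sum.inl (Sum.inr b) => rfl
      | Sum.inr cd =>
        show w (Sum.inr ⟨(cd.1.1, σ cd.1.1), hσ cd.1.1⟩) = w (Sum.inr cd)
        refine congrArg (fun e => w (Sum.inr e)) (Subtype.ext ?_)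
        show (cd.1.1, σ cd.1.1) = cd.1
        have hcd : cd.1.2 = σ cd.1.1 := hσu cd.1.1 cd.1.2 cd.2
        rw [← hcd]
    have h1 := keyeval b0w v'w
    rw [hcon b0w, map_zero, hww] at h1
    exact h1.symm
  obtain ⟨b0, hb0⟩ := hb0
  refine ⟨C, fun i => ⟨g i, (hmemC i _).mpr rfl, fun j hj => (hmemC i j).mp hj⟩,
    MvPolynomial.eval₂ MvPolynomial.C (θ b0) p, hb0, ?_⟩
  intro v' hv' s
  have hw : MvPolynomial.eval (W b0 v') p ≠ 0 := by rw [← keyeval]; exact hv'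
  have hrank := hp (W b0 v') hw s
  have hcard : n + q = Fintype.card (Fin n ⊕ Fin q) := by simp
  rw [hcard, rank_eq_card_iff'] at hrank
  rw [rank_eq_card_iff']
  intro x hx
  rw [Matrix.fromRows_mulVec] at hx
  have hx1 : ∀ i : Fin n,
      ((Pattern.realize A (fun e => v' (Sum.inl e)) - s • (1 : Matrix (Fin n) (Fin n) ℂ))
        *ᵥ x) i = 0 := fun i => congrFun hx (Sum.inl i)
  have hx2 : ∀ i : Fin k,
      (Pattern.realize C (fun e => v' (Sum.inr e)) *ᵥ x) i = 0 :=
    fun i => congrFun hx (Sum.inr i)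
  have hy := hrank (Sum.elim x 0) ?_
  · funext j
    exact congrFun hy (Sum.inl j)
  · rw [Matrix.fromBlocks_mulVec]
    have hxl : (Sum.elim x (0 : Fin q → ℂ)) ∘ Sum.inl = x := rfl
    have hxr : (Sum.elim x (0 : Fin q → ℂ)) ∘ Sum.inr = 0 := rfl
    rw [hxl, hxr, Matrix.mulVec_zero, Matrix.mulVec_zero, add_zero, add_zero]
    funext r
    match r with
    | Sum.inl i =>
      show ((Pattern.realize A (fun e => W b0 v' (Sum.inl (Sum.inl e)))
          - s • (1 : Matrix (Fin n) (Fin n) ℂ)) *ᵥ x) i = 0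
      exact hx1 i
    | Sum.inr i =>
      show ((Matrix.of fun i j =>
          Pattern.realize CD (fun e => W b0 v' (Sum.inr e)) i (Sum.inl j)) *ᵥ x) i = 0
      match hsi : σ i with
      | Sum.inl j0 =>
        have hgi : g i = j0 := by rw [hgdef]; show Sum.elim id f (σ i) = j0; rw [hsi]; rfl
        have hrow : ((Matrix.of fun i j =>
            Pattern.realize CD (fun e => W b0 v' (Sum.inr e)) i (Sum.inl j)) *ᵥ x) i
            = v' (Sum.inr ⟨(i, g i), (hmemC i (g i)).mpr rfl⟩) * x j0 := by
          refine row_single _ _ j0 _ (fun j => ?_) _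
          have hthis := realize_row CD σ (fun r c => ⟨fun hm => hσu r c hm,
            fun hc => hc ▸ hσ r⟩) (fun e => W b0 v' (Sum.inr e)) i (Sum.inl j)
          by_cases hj : j = j0
          · have hc : Sum.inl j = σ i := by rw [hsi, hj]
            rw [Matrix.of_apply, hthis, if_pos hc, if_pos hj]
          · have hne : ¬ (Sum.inl j = σ i) := by
              rw [hsi]; exact fun hcon => hj (by injection hcon)
            rw [Matrix.of_apply, hthis, if_neg hne, if_neg hj]
        rw [hrow]
        have hrow2 : (Pattern.realize C (fun e => v' (Sum.inr e)) *ᵥ x) i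
            = v' (Sum.inr ⟨(i, g i), (hmemC i (g i)).mpr rfl⟩) * x (g i) := by
          refine row_single _ _ (g i) _ (fun j => ?_) _
          rw [realize_row C g hmemC (fun e => v' (Sum.inr e)) i j]
        have := hx2 i
        rw [hrow2] at this
        rw [← hgi]
        exact this
      | Sum.inr t =>
        refine row_zero _ _ (fun j => ?_) _
        have hthis := realize_row CD σ (fun r c => ⟨fun hm => hσu r c hm,
          fun hc => hc ▸ hσ r⟩) (fun e => W b0 v' (Sum.inr e)) i (Sum.inl j)
        have hne : ¬ (Sum.inl j = σ i) := by
          rw [hsi]; exact fun hcon => Sum.inl_ne_inr hcon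
        rw [Matrix.of_apply, hthis, if_neg hne]

end Aux

/-- For a structured system `(A, B)` with `q` dedicated inputs, the minimum number of
dedicated sensors that may measure either a state or an input (each row of the compound
pattern `[C D]` has exactly one free entry) making `(A, B, C, D)` GSIO lies in the
integer interval `[H(A), H(A) + q]`. -/
theorem minimal_GSIO_bounds_with_feedthrough (n q : ℕ) (A : Finset (Fin n × Fin n))
    (B : Finset (Fin n × Fin q)) (f : Fin q → Fin n) (hf : Function.Injective f)
    (hB : ∀ (i : Fin n) (j : Fin q), (i, j) ∈ B ↔ i = f j) :
    Hmin A ≤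
        sInf {k : ℕ | ∃ CD : Finset (Fin k × (Fin n ⊕ Fin q)),
          (∀ i : Fin k, ∃! c : Fin n ⊕ Fin q, (i, c) ∈ CD) ∧ IsGSIOD A B CD} ∧
      sInf {k : ℕ | ∃ CD : Finset (Fin k × (Fin n ⊕ Fin q)),
          (∀ i : Fin k, ∃! c : Fin n ⊕ Fin q, (i, c) ∈ CD) ∧ IsGSIOD A B CD} ≤
        Hmin A + q := by
  have hne : {k : ℕ | ∃ C : Finset (Fin k × Fin n),
      (∀ i : Fin k, ∃! j : Fin n, (i, j) ∈ C) ∧ IsStructObs A C}.Nonempty :=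
    ⟨n, aux_obs_baseline n A⟩
  have hHmem : Hmin A ∈ {k : ℕ | ∃ C : Finset (Fin k × Fin n),
      (∀ i : Fin k, ∃! j : Fin n, (i, j) ∈ C) ∧ IsStructObs A C} := Nat.sInf_mem hne
  obtain ⟨C0, hC0ded, hC0obs⟩ := hHmem
  obtain ⟨CD0, hCD0ded, hCD0g⟩ := aux_gsio_of_obs A B C0 hC0ded hC0obs
  have hSmem : Hmin A + q ∈ {k : ℕ | ∃ CD : Finset (Fin k × (Fin n ⊕ Fin q)),
      (∀ i : Fin k, ∃! c : Fin n ⊕ Fin q, (i, c) ∈ CD) ∧ IsGSIOD A B CD} :=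
    ⟨CD0, hCD0ded, hCD0g⟩
  have hSne : {k : ℕ | ∃ CD : Finset (Fin k × (Fin n ⊕ Fin q)),
      (∀ i : Fin k, ∃! c : Fin n ⊕ Fin q, (i, c) ∈ CD) ∧ IsGSIOD A B CD}.Nonempty :=
    ⟨_, hSmem⟩
  constructor
  · obtain ⟨CD1, hCD1ded, hCD1g⟩ := Nat.sInf_mem hSne
    obtain ⟨C1, hC1ded, hC1obs⟩ := aux_obs_of_gsio A B f CD1 hCD1ded hCD1g
    exact Nat.sInf_le ⟨C1, hC1ded, hC1obs⟩
  · exact Nat.sInf_le hSmem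
end

section
/- Let A ∈ {0,*}^{n×n}, let B ∈ {0,*}^{n×q} be a dedicated input pattern, and let C be a dedicated output pattern on the n states. If (A,B,C) is GSIO, then the pair (Â, [C 0]) is structurally observable, where [C 0] is C extended by q zero columns indexed by the input vertices of Â. Consequently, the number of dedicated sensors in any C making (A,B,C) GSIO is at least H(Â). -/
/-- The structured system `(A, B, C)` (with zero feedthrough) is generically state and
input observable (GSIO): there is a nonzero polynomial in the free entries of the
patterns such that every realization at which it does not vanish has a Rosenbrock
matrix `[[Ã - s I, B̃], [C̃, 0]]` of full column rank `n + q` for every `s ∈ ℂ`. -/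
def IsGSIO {n q m : ℕ} (A : Finset (Fin n × Fin n)) (B : Finset (Fin n × Fin q))
    (C : Finset (Fin m × Fin n)) : Prop :=
  ∃ p : MvPolynomial (({e // e ∈ A} ⊕ {e // e ∈ B}) ⊕ {e // e ∈ C}) ℂ, p ≠ 0 ∧
    ∀ v : (({e // e ∈ A} ⊕ {e // e ∈ B}) ⊕ {e // e ∈ C}) → ℂ,
      MvPolynomial.eval v p ≠ 0 → ∀ s : ℂ,
        (Matrix.fromBlocks
            (Pattern.realize A (fun e => v (Sum.inl (Sum.inl e))) -
              s • (1 : Matrix (Fin n) (Fin n) ℂ))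
            (Pattern.realize B (fun e => v (Sum.inl (Sum.inr e))))
            (Pattern.realize C (fun e => v (Sum.inr e))) 0).rank = n + q

/-- The auxiliary pattern `Â = [[A', B], [0, 0]]` on the index type `Fin n ⊕ Fin q`
(states together with inputs viewed as extra state vertices), where `A'` equals `A`
except that every row of `A` indexed by the set `I` of input-driven states is set to
zero. -/
def auxPattern {n q : ℕ} (A : Finset (Fin n × Fin n)) (B : Finset (Fin n × Fin q))
    (I : Finset (Fin n)) : Finset ((Fin n ⊕ Fin q) × (Fin n ⊕ Fin q)) :=
  ((A.filter fun e => e.1 ∉ I).image fun e => (Sum.inl e.1, Sum.inl e.2)) ∪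
    (B.image fun e => (Sum.inl e.1, Sum.inr e.2))

namespace AuxProof
open MvPolynomial
variable {n q m : ℕ} {A : Finset (Fin n × Fin n)} {B : Finset (Fin n × Fin q)}
  {C : Finset (Fin m × Fin n)} {I : Finset (Fin n)}

lemma aux_ll {i j : Fin n} :
    ((Sum.inl i, Sum.inl j) : (Fin n ⊕ Fin q) × (Fin n ⊕ Fin q)) ∈ auxPattern A B I ↔
      (i, j) ∈ A ∧ i ∉ I := by
  simp only [auxPattern, Finset.mem_union, Finset.mem_image, Finset.mem_filter,
    Prod.mk.injEq, Sum.inl.injEq, reduceCtorEq, and_false, exists_false, or_false]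
  constructor
  · rintro ⟨⟨a, b⟩, ⟨hA, hI⟩, h1, h2⟩; subst h1; subst h2; exact ⟨hA, hI⟩
  · rintro ⟨hA, hI⟩; exact ⟨(i, j), ⟨hA, hI⟩, rfl, rfl⟩

lemma aux_lr {i : Fin n} {j : Fin q} :
    ((Sum.inl i, Sum.inr j) : (Fin n ⊕ Fin q) × (Fin n ⊕ Fin q)) ∈ auxPattern A B I ↔
      (i, j) ∈ B := by
  simp only [auxPattern, Finset.mem_union, Finset.mem_image, Finset.mem_filter,
    Prod.mk.injEq, Sum.inl.injEq, Sum.inr.injEq, reduceCtorEq, and_false, false_and,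
    exists_false, false_or]
  constructor
  · rintro ⟨⟨a, b⟩, hB, h1, h2⟩; subst h1; subst h2; exact hB
  · intro hB; exact ⟨(i, j), hB, rfl, rfl⟩

lemma aux_r {i : Fin q} {y : Fin n ⊕ Fin q} :
    ((Sum.inr i, y) : (Fin n ⊕ Fin q) × (Fin n ⊕ Fin q)) ∉ auxPattern A B I := by
  simp [auxPattern, Finset.mem_union, Finset.mem_image]

lemma mem_hatC {i : Fin m} {j : Fin n} :
    ((i, Sum.inl j) : Fin m × (Fin n ⊕ Fin q)) ∈
      (C.image fun e => (e.1, (Sum.inl e.2 : Fin n ⊕ Fin q))) ↔ (i, j) ∈ C := by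
  constructor
  · intro h
    obtain ⟨⟨a, b⟩, hC, he⟩ := Finset.mem_image.mp h
    obtain ⟨h1, h2⟩ := Prod.mk.injEq .. ▸ he
    cases h1; cases Sum.inl.inj h2; exact hC
  · intro h; exact Finset.mem_image.mpr ⟨(i, j), h, rfl⟩

lemma hatC_r {i : Fin m} {j : Fin q} :
    ((i, Sum.inr j) : Fin m × (Fin n ⊕ Fin q)) ∉
      (C.image fun e => (e.1, (Sum.inl e.2 : Fin n ⊕ Fin q))) := by
  simp [Finset.mem_image]

/-- The substitution sending original pattern variables to auxiliary-pattern variables,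
with the deleted `A`-entries (rows in `I`) sent to the constants `v₀`. -/
noncomputable def gsub (A : Finset (Fin n × Fin n)) (B : Finset (Fin n × Fin q))
    (C : Finset (Fin m × Fin n)) (I : Finset (Fin n))
    (v₀ : (({e // e ∈ A} ⊕ {e // e ∈ B}) ⊕ {e // e ∈ C}) → ℂ) :
    (({e // e ∈ A} ⊕ {e // e ∈ B}) ⊕ {e // e ∈ C}) →
      MvPolynomial ({e // e ∈ auxPattern A B I} ⊕
        {e // e ∈ C.image fun e => (e.1, (Sum.inl e.2 : Fin n ⊕ Fin q))}) ℂ :=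
  fun e => match e with
  | Sum.inl (Sum.inl a) =>
      if h : a.1.1 ∈ I then MvPolynomial.C (v₀ (Sum.inl (Sum.inl a)))
      else MvPolynomial.X (Sum.inl ⟨(Sum.inl a.1.1, Sum.inl a.1.2), aux_ll.mpr ⟨a.2, h⟩⟩)
  | Sum.inl (Sum.inr b) =>
      MvPolynomial.X (Sum.inl ⟨(Sum.inl b.1.1, Sum.inr b.1.2), aux_lr.mpr b.2⟩)
  | Sum.inr c => MvPolynomial.X (Sum.inr ⟨(c.1.1, Sum.inl c.1.2), mem_hatC.mpr c.2⟩)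

/-- A valuation of the auxiliary variables induced by a valuation of the original ones. -/
def vlift (A : Finset (Fin n × Fin n)) (B : Finset (Fin n × Fin q))
    (C : Finset (Fin m × Fin n)) (I : Finset (Fin n))
    (v₀ : (({e // e ∈ A} ⊕ {e // e ∈ B}) ⊕ {e // e ∈ C}) → ℂ) :
    ({e // e ∈ auxPattern A B I} ⊕
      {e // e ∈ C.image fun e => (e.1, (Sum.inl e.2 : Fin n ⊕ Fin q))}) → ℂ :=
  fun s => match s with
  | Sum.inl ⟨(Sum.inl i, Sum.inl j), _⟩ =>
      if h : (i, j) ∈ A then v₀ (Sum.inl (Sum.inl ⟨(i, j), h⟩)) else 0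
  | Sum.inl ⟨(Sum.inl i, Sum.inr j), _⟩ =>
      if h : (i, j) ∈ B then v₀ (Sum.inl (Sum.inr ⟨(i, j), h⟩)) else 0
  | Sum.inl ⟨(Sum.inr _, _), _⟩ => 0
  | Sum.inr ⟨(i, Sum.inl j), _⟩ =>
      if h : (i, j) ∈ C then v₀ (Sum.inr ⟨(i, j), h⟩) else 0
  | Sum.inr ⟨(_, Sum.inr _), _⟩ => 0

lemma eval_vlift_gsub (v₀ : (({e // e ∈ A} ⊕ {e // e ∈ B}) ⊕ {e // e ∈ C}) → ℂ)
    (e : ({e // e ∈ A} ⊕ {e // e ∈ B}) ⊕ {e // e ∈ C}) :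
    MvPolynomial.eval (vlift A B C I v₀) (gsub A B C I v₀ e) = v₀ e := by
  match e with
  | Sum.inl (Sum.inl a) =>
      by_cases h : a.1.1 ∈ I
      · simp [gsub, h]
      · simp only [gsub, h, dif_neg, not_false_iff, MvPolynomial.eval_X]
        show (if h : (a.1.1, a.1.2) ∈ A then _ else 0) = _
        rw [dif_pos a.2]
  | Sum.inl (Sum.inr b) =>
      simp only [gsub, MvPolynomial.eval_X]
      show (if h : (b.1.1, b.1.2) ∈ B then _ else 0) = _
      rw [dif_pos b.2]
  | Sum.inr c =>
      simp only [gsub, MvPolynomial.eval_X]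
      show (if h : (c.1.1, c.1.2) ∈ C then _ else 0) = _
      rw [dif_pos c.2]

lemma eval_bind₁' {σ τ : Type*} (g : τ → ℂ) (h : σ → MvPolynomial τ ℂ)
    (φ : MvPolynomial σ ℂ) :
    MvPolynomial.eval g (MvPolynomial.bind₁ h φ) =
      MvPolynomial.eval (fun i => MvPolynomial.eval g (h i)) φ :=
  MvPolynomial.eval₂Hom_bind₁ _ _ _ _

lemma realize_aux_inl_inl (v' : {e // e ∈ auxPattern A B I} → ℂ) (i j : Fin n) :
    Pattern.realize (auxPattern A B I) v' (Sum.inl i) (Sum.inl j) =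
      if h : (i, j) ∈ A ∧ i ∉ I then v' ⟨(Sum.inl i, Sum.inl j), aux_ll.mpr h⟩ else 0 := by
  show (if h : _ ∈ auxPattern A B I then _ else 0) = _
  by_cases h : (i, j) ∈ A ∧ i ∉ I
  · rw [dif_pos (aux_ll.mpr h), dif_pos h]
  · rw [dif_neg (fun hc => h (aux_ll.mp hc)), dif_neg h]

lemma realize_aux_inl_inr (v' : {e // e ∈ auxPattern A B I} → ℂ) (i : Fin n) (j : Fin q) :
    Pattern.realize (auxPattern A B I) v' (Sum.inl i) (Sum.inr j) =
      if h : (i, j) ∈ B then v' ⟨(Sum.inl i, Sum.inr j), aux_lr.mpr h⟩ else 0 := by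
  show (if h : _ ∈ auxPattern A B I then _ else 0) = _
  by_cases h : (i, j) ∈ B
  · rw [dif_pos (aux_lr.mpr h), dif_pos h]
  · rw [dif_neg (fun hc => h (aux_lr.mp hc)), dif_neg h]

lemma realize_aux_inr (v' : {e // e ∈ auxPattern A B I} → ℂ) (i : Fin q)
    (y : Fin n ⊕ Fin q) :
    Pattern.realize (auxPattern A B I) v' (Sum.inr i) y = 0 := by
  show (if h : _ ∈ auxPattern A B I then _ else 0) = _
  rw [dif_neg aux_r]

lemma realize_hatC_inl
    (v' : {e // e ∈ C.image fun e => (e.1, (Sum.inl e.2 : Fin n ⊕ Fin q))} → ℂ)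
    (i : Fin m) (j : Fin n) :
    Pattern.realize (C.image fun e => (e.1, (Sum.inl e.2 : Fin n ⊕ Fin q))) v' i (Sum.inl j) =
      if h : (i, j) ∈ C then v' ⟨(i, Sum.inl j), mem_hatC.mpr h⟩ else 0 := by
  show (if h : _ ∈ _ then _ else 0) = _
  by_cases h : (i, j) ∈ C
  · rw [dif_pos (mem_hatC.mpr h), dif_pos h]
  · rw [dif_neg (fun hc => h (mem_hatC.mp hc)), dif_neg h]

lemma realize_hatC_inr
    (v' : {e // e ∈ C.image fun e => (e.1, (Sum.inl e.2 : Fin n ⊕ Fin q))} → ℂ)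
    (i : Fin m) (j : Fin q) :
    Pattern.realize (C.image fun e => (e.1, (Sum.inl e.2 : Fin n ⊕ Fin q))) v' i (Sum.inr j) = 0 := by
  show (if h : _ ∈ _ then _ else 0) = _
  rw [dif_neg hatC_r]

lemma realize_apply {a b : Type*} [DecidableEq a] [DecidableEq b] (P : Finset (a × b))
    (v : {e // e ∈ P} → ℂ) (i : a) (j : b) :
    Pattern.realize P v i j = if h : (i, j) ∈ P then v ⟨(i, j), h⟩ else 0 := rfl

end AuxProof

section Main
open AuxProof MvPolynomial Matrix

lemma rank_eq_card_iff_ker {a b : Type*} [Fintype a] [Fintype b] [DecidableEq b]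
    (M : Matrix a b ℂ) : M.rank = Fintype.card b ↔ ∀ v, M.mulVec v = 0 → v = 0 := by
  rw [← Matrix.ker_mulVecLin_eq_bot_iff]
  have h2 := LinearMap.finrank_range_add_finrank_ker M.mulVecLin
  rw [Module.finrank_pi] at h2
  constructor
  · intro h
    rw [Matrix.rank] at h
    have : Module.finrank ℂ (LinearMap.ker M.mulVecLin) = 0 := by omega
    exact Submodule.finrank_eq_zero.mp this
  · intro h
    rw [h, finrank_bot] at h2
    rw [Matrix.rank]; omega

/-- If `(A, B, C)` is GSIO, where `B` is a dedicated input pattern (input `j` drives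
state `f j`, `f` injective) and `C` is a dedicated output pattern on the states, then
the auxiliary pair `(Â, [C 0])` is structurally observable, where `[C 0]` is `C`
extended by `q` zero columns indexed by the input vertices of `Â`. Consequently, the
number `m` of dedicated sensors in any such `C` is at least `H(Â)`. -/
theorem GSIO_implies_aux_structural_observability (n q m : ℕ)
    (A : Finset (Fin n × Fin n)) (B : Finset (Fin n × Fin q))
    (f : Fin q → Fin n) (hf : Function.Injective f)
    (hB : ∀ (i : Fin n) (j : Fin q), (i, j) ∈ B ↔ i = f j)
    (C : Finset (Fin m × Fin n))
    (hded : ∀ i : Fin m, ∃! j : Fin n, (i, j) ∈ C)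
    (hGSIO : IsGSIO A B C) :
    IsStructObs (auxPattern A B (Finset.image f Finset.univ))
        (C.image fun e => (e.1, (Sum.inl e.2 : Fin n ⊕ Fin q))) ∧
      Hmin (auxPattern A B (Finset.image f Finset.univ)) ≤ m := by
  classical
  obtain ⟨p, hp, hrank⟩ := hGSIO
  set I : Finset (Fin n) := Finset.image f Finset.univ with hIdef
  -- choose a generic evaluation point v₀
  have hex : ∃ v₀ : (({e // e ∈ A} ⊕ {e // e ∈ B}) ⊕ {e // e ∈ C}) → ℂ,
      MvPolynomial.eval v₀
        (p * ∏ e : {e // e ∈ B}, MvPolynomial.X (Sum.inl (Sum.inr e))) ≠ 0 := by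
    by_contra hc
    push_neg at hc
    have h0 : p * ∏ e : {e // e ∈ B}, (MvPolynomial.X (Sum.inl (Sum.inr e)) :
        MvPolynomial (({e // e ∈ A} ⊕ {e // e ∈ B}) ⊕ {e // e ∈ C}) ℂ) = 0 :=
      MvPolynomial.funext fun x => by simpa using hc x
    have h1 : (∏ e : {e // e ∈ B}, (MvPolynomial.X (Sum.inl (Sum.inr e)) :
        MvPolynomial (({e // e ∈ A} ⊕ {e // e ∈ B}) ⊕ {e // e ∈ C}) ℂ)) ≠ 0 :=
      Finset.prod_ne_zero_iff.mpr fun e _ => MvPolynomial.X_ne_zero _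
    exact (mul_ne_zero hp h1) h0
  obtain ⟨v₀, hv₀⟩ := hex
  rw [_root_.map_mul] at hv₀
  have hv₀p : MvPolynomial.eval v₀ p ≠ 0 := fun h => hv₀ (by rw [h, zero_mul])
  have hv₀B : ∀ e : {e // e ∈ B}, v₀ (Sum.inl (Sum.inr e)) ≠ 0 := by
    intro e
    have h2 : MvPolynomial.eval v₀
        (∏ e : {e // e ∈ B}, MvPolynomial.X (Sum.inl (Sum.inr e)) :
          MvPolynomial (({e // e ∈ A} ⊕ {e // e ∈ B}) ⊕ {e // e ∈ C}) ℂ) ≠ 0 :=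
      fun h => hv₀ (by rw [h, mul_zero])
    rw [map_prod] at h2
    simp only [MvPolynomial.eval_X] at h2
    exact Finset.prod_ne_zero_iff.mp h2 e (Finset.mem_univ e)
  -- the new polynomial
  set p' : MvPolynomial ({e // e ∈ auxPattern A B I} ⊕
      {e // e ∈ C.image fun e => (e.1, (Sum.inl e.2 : Fin n ⊕ Fin q))}) ℂ :=
    (∏ e : {e // e ∈ B},
      MvPolynomial.X (Sum.inl ⟨(Sum.inl e.1.1, Sum.inr e.1.2), aux_lr.mpr e.2⟩)) *
      MvPolynomial.bind₁ (gsub A B C I v₀) p with hp'def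
  have hvlift_eval : MvPolynomial.eval (vlift A B C I v₀) p' =
      (∏ e : {e // e ∈ B}, v₀ (Sum.inl (Sum.inr e))) * MvPolynomial.eval v₀ p := by
    rw [hp'def, _root_.map_mul, map_prod, eval_bind₁']
    congr 1
    · refine Finset.prod_congr rfl fun e _ => ?_
      rw [MvPolynomial.eval_X]
      show (if h : (e.1.1, e.1.2) ∈ B then _ else 0) = _
      rw [dif_pos e.2]
    · exact congrArg (fun w => MvPolynomial.eval w p) (funext (eval_vlift_gsub v₀))
  have hp' : p' ≠ 0 := by
    intro h
    rw [h, map_zero] at hvlift_eval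
    exact (mul_ne_zero (Finset.prod_ne_zero_iff.mpr fun e _ => hv₀B e) hv₀p)
      hvlift_eval.symm
  -- the main genericity claim
  have main : ∀ v' : ({e // e ∈ auxPattern A B I} ⊕
        {e // e ∈ C.image fun e => (e.1, (Sum.inl e.2 : Fin n ⊕ Fin q))}) → ℂ,
      MvPolynomial.eval v' p' ≠ 0 → ∀ s : ℂ,
        (Matrix.fromRows
            (Pattern.realize (auxPattern A B I) (fun e => v' (Sum.inl e)) -
              s • (1 : Matrix (Fin n ⊕ Fin q) (Fin n ⊕ Fin q) ℂ))
            (Pattern.realize (C.image fun e => (e.1, (Sum.inl e.2 : Fin n ⊕ Fin q)))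
              (fun e => v' (Sum.inr e)))).rank = Fintype.card (Fin n ⊕ Fin q) := by
    intro v' hv' s
    set v : (({e // e ∈ A} ⊕ {e // e ∈ B}) ⊕ {e // e ∈ C}) → ℂ :=
      fun e => MvPolynomial.eval v' (gsub A B C I v₀ e) with hvdef
    have hfactors : MvPolynomial.eval v' p' =
        (∏ e : {e // e ∈ B},
          v' (Sum.inl ⟨(Sum.inl e.1.1, Sum.inr e.1.2), aux_lr.mpr e.2⟩)) *
          MvPolynomial.eval v p := by
      rw [hp'def, _root_.map_mul, map_prod, eval_bind₁']
      simp only [MvPolynomial.eval_X]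
      rfl
    have hvp : MvPolynomial.eval v p ≠ 0 := fun h => hv' (by rw [hfactors, h, mul_zero])
    have hprodB : ∀ e : {e // e ∈ B},
        v' (Sum.inl ⟨(Sum.inl e.1.1, Sum.inr e.1.2), aux_lr.mpr e.2⟩) ≠ 0 := by
      intro e
      have h2 : (∏ e : {e // e ∈ B},
          v' (Sum.inl ⟨(Sum.inl e.1.1, Sum.inr e.1.2), aux_lr.mpr e.2⟩)) ≠ 0 :=
        fun h => hv' (by rw [hfactors, h, zero_mul])
      exact Finset.prod_ne_zero_iff.mp h2 e (Finset.mem_univ e)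
    set Atil : Matrix (Fin n) (Fin n) ℂ :=
      Pattern.realize A (fun e => v (Sum.inl (Sum.inl e))) with hAtil
    set Btil : Matrix (Fin n) (Fin q) ℂ :=
      Pattern.realize B (fun e => v (Sum.inl (Sum.inr e))) with hBtil
    set Ctil : Matrix (Fin m) (Fin n) ℂ :=
      Pattern.realize C (fun e => v (Sum.inr e)) with hCtil
    set D : Matrix (Fin n) (Fin n) ℂ :=
      Matrix.of (fun i j => if i ∈ I then Atil i j else 0) with hDdef
    have hker : ∀ w, (Matrix.fromBlocks (Atil - s • 1) Btil Ctil 0).mulVec w = 0 → w = 0 := by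
      have hr := hrank v hvp s
      have hcard : Fintype.card (Fin n ⊕ Fin q) = n + q := by simp
      exact (rank_eq_card_iff_ker _).mp (by rw [hcard]; exact hr)
    -- the two key matrix identities
    have hAhat : Pattern.realize (auxPattern A B I) (fun e => v' (Sum.inl e)) -
        s • (1 : Matrix (Fin n ⊕ Fin q) (Fin n ⊕ Fin q) ℂ) =
        Matrix.fromBlocks (Atil - D - s • (1 : Matrix (Fin n) (Fin n) ℂ)) Btil 0
          (-(s • (1 : Matrix (Fin q) (Fin q) ℂ))) := by
      ext y w
      rcases y with i | i <;> rcases w with j | j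
      · simp only [Matrix.sub_apply, Matrix.smul_apply, Matrix.one_apply,
          Matrix.fromBlocks_apply₁₁, realize_aux_inl_inl, Sum.inl.injEq, hDdef,
          Matrix.of_apply, smul_eq_mul]
        by_cases hI : i ∈ I
        · rw [dif_neg (by tauto)]
          simp [hI]
        · by_cases hA : (i, j) ∈ A
          · rw [dif_pos ⟨hA, hI⟩]
            have : Atil i j = v' (Sum.inl ⟨(Sum.inl i, Sum.inl j), aux_ll.mpr ⟨hA, hI⟩⟩) := by
              rw [hAtil, realize_apply, dif_pos hA, hvdef]
              simp only [gsub, hI, dif_neg, not_false_iff, MvPolynomial.eval_X]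
            rw [this]
            simp [hI]
          · rw [dif_neg (by tauto)]
            have : Atil i j = 0 := by rw [hAtil, realize_apply, dif_neg hA]
            rw [this]
            simp [hI]
      · simp only [Matrix.sub_apply, Matrix.smul_apply, Matrix.one_apply,
          Matrix.fromBlocks_apply₁₂, realize_aux_inl_inr, smul_eq_mul]
        have : (Sum.inl i : Fin n ⊕ Fin q) ≠ Sum.inr j := by simp
        rw [if_neg this, mul_zero, sub_zero, hBtil, realize_apply]
        by_cases hBij : (i, j) ∈ B
        · rw [dif_pos hBij, dif_pos hBij, hvdef]
          simp only [gsub, MvPolynomial.eval_X]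
        · rw [dif_neg hBij, dif_neg hBij]
      · simp only [Matrix.sub_apply, Matrix.smul_apply, Matrix.one_apply,
          Matrix.fromBlocks_apply₂₁, realize_aux_inr, smul_eq_mul, Matrix.zero_apply]
        have : (Sum.inr i : Fin n ⊕ Fin q) ≠ Sum.inl j := by simp
        rw [if_neg this, mul_zero, sub_zero]
      · simp only [Matrix.sub_apply, Matrix.smul_apply, Matrix.one_apply,
          Matrix.fromBlocks_apply₂₂, realize_aux_inr, smul_eq_mul, Matrix.neg_apply,
          Sum.inr.injEq]
        simp
    have hChat : Pattern.realize (C.image fun e => (e.1, (Sum.inl e.2 : Fin n ⊕ Fin q)))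
        (fun e => v' (Sum.inr e)) = Matrix.fromCols Ctil 0 := by
      ext i w
      rcases w with j | j
      · rw [realize_hatC_inl, Matrix.fromCols_apply_inl, hCtil, realize_apply]
        by_cases hC : (i, j) ∈ C
        · rw [dif_pos hC, dif_pos hC, hvdef]
          simp only [gsub, MvPolynomial.eval_X]
        · rw [dif_neg hC, dif_neg hC]
      · rw [realize_hatC_inr, Matrix.fromCols_apply_inr, Matrix.zero_apply]
    rw [rank_eq_card_iff_ker]
    intro z hz
    rw [Matrix.fromRows_mulVec, hAhat, hChat, Matrix.fromBlocks_mulVec] at hz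
    set x : Fin n → ℂ := z ∘ Sum.inl with hxdef
    set u : Fin q → ℂ := z ∘ Sum.inr with hudef
    have hA1 : (Atil - D - s • 1).mulVec x + Btil.mulVec u = 0 :=
      funext fun i => congrFun hz (Sum.inl (Sum.inl i))
    have hC1 : Ctil.mulVec x = 0 := by
      have hzz : z = Sum.elim x u := by funext y; rcases y with i | i <;> rfl
      have hcz : (Matrix.fromCols Ctil 0).mulVec z = 0 :=
        funext fun i => congrFun hz (Sum.inr i)
      rw [hzz, Matrix.fromCols_mulVec_sumElim, Matrix.zero_mulVec, add_zero] at hcz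
      exact hcz
    have hbval : ∀ j : Fin q, Btil (f j) j ≠ 0 := by
      intro j
      have hmem : (f j, j) ∈ B := (hB (f j) j).mpr rfl
      have : Btil (f j) j = v' (Sum.inl ⟨(Sum.inl (f j), Sum.inr j), aux_lr.mpr hmem⟩) := by
        rw [hBtil, realize_apply, dif_pos hmem, hvdef]
        simp only [gsub, MvPolynomial.eval_X]
      rw [this]
      exact hprodB ⟨(f j, j), hmem⟩
    set u'' : Fin q → ℂ := fun j => (D.mulVec x) (f j) / Btil (f j) j with hu''def
    have key : Btil.mulVec u'' = D.mulVec x := by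
      funext i
      show ∑ j, Btil i j * u'' j = (D.mulVec x) i
      by_cases hi : i ∈ I
      · rw [hIdef] at hi
        obtain ⟨j₀, -, rfl⟩ := Finset.mem_image.mp hi
        rw [Finset.sum_eq_single j₀]
        · rw [hu''def, mul_comm, div_mul_cancel₀ _ (hbval j₀)]
        · intro j _ hj
          have hnb : (f j₀, j) ∉ B := fun h => hj (hf ((hB _ _).mp h)).symm
          have : Btil (f j₀) j = 0 := by rw [hBtil, realize_apply, dif_neg hnb]
          rw [this, zero_mul]
        · intro h; exact absurd (Finset.mem_univ j₀) h
      · have hDz : (D.mulVec x) i = 0 := by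
          show ∑ j, D i j * x j = 0
          apply Finset.sum_eq_zero
          intro j _
          rw [hDdef]
          simp [hi]
        rw [hDz]
        apply Finset.sum_eq_zero
        intro j _
        have hnb : (i, j) ∉ B := by
          intro h
          exact hi (by rw [(hB _ _).mp h, hIdef]; exact Finset.mem_image.mpr ⟨j, Finset.mem_univ j, rfl⟩)
        have : Btil i j = 0 := by rw [hBtil, realize_apply, dif_neg hnb]
        rw [this, zero_mul]
    have htopfinal : (Atil - s • 1).mulVec x + Btil.mulVec (u - u'') = 0 := by
      have hsplit : Atil - s • (1 : Matrix (Fin n) (Fin n) ℂ) = (Atil - D - s • 1) + D := by abel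
      rw [hsplit, Matrix.add_mulVec, Matrix.mulVec_sub, key]
      calc (Atil - D - s • 1).mulVec x + D.mulVec x + (Btil.mulVec u - D.mulVec x)
          = (Atil - D - s • 1).mulVec x + Btil.mulVec u := by abel
        _ = 0 := hA1
    have hw0 : Sum.elim x (u - u'') = 0 := by
      apply hker
      rw [Matrix.fromBlocks_mulVec]
      funext y
      rcases y with i | i
      · exact congrFun htopfinal i
      · show (Ctil.mulVec (Sum.elim x (u - u'') ∘ Sum.inl) +
            (0 : Matrix (Fin m) (Fin q) ℂ).mulVec (Sum.elim x (u - u'') ∘ Sum.inr)) i = 0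
        rw [Matrix.zero_mulVec]
        have : Sum.elim x (u - u'') ∘ Sum.inl = x := rfl
        rw [this, hC1]
        simp
    have hx0 : x = 0 := funext fun i => congrFun hw0 (Sum.inl i)
    have hu''0 : u'' = 0 := by
      funext j
      rw [hu''def]
      show (D.mulVec x) (f j) / Btil (f j) j = 0
      rw [hx0, Matrix.mulVec_zero]
      simp
    have hu0 : u = 0 := by
      have h1 : u - u'' = 0 := funext fun j => congrFun hw0 (Sum.inr j)
      calc u = (u - u'') + u'' := by abel
        _ = 0 := by rw [h1, hu''0, add_zero]
    funext y
    rcases y with i | i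
    · exact congrFun hx0 i
    · exact congrFun hu0 i
  have part1 : IsStructObs (auxPattern A B I)
      (C.image fun e => (e.1, (Sum.inl e.2 : Fin n ⊕ Fin q))) := ⟨p', hp', main⟩
  refine ⟨part1, ?_⟩
  -- Hmin ≤ m
  apply Nat.sInf_le
  refine ⟨C.image fun e => (e.1, (Sum.inl e.2 : Fin n ⊕ Fin q)), fun i => ?_, part1⟩
  obtain ⟨j₀, hj₀, huniq⟩ := hded i
  refine ⟨Sum.inl j₀, mem_hatC.mpr hj₀, ?_⟩
  rintro (y | y) hy
  · rw [Sum.inl.injEq]; exact huniq y (mem_hatC.mp hy)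
  · exact absurd hy hatC_r

end Main
end

section
/- Let A ∈ {0,*}^{n×n} and let B ∈ {0,*}^{n×q} be a dedicated input pattern. Then there exists a dedicated output pattern C on the n states with at most H(Â)+q rows (i.e., at most H(Â)+q dedicated sensors) such that (A,B,C) is GSIO. -/
open Matrix MvPolynomial

section Helpers

lemma realize_mulVec_dedicated {a b : Type*} [Fintype b] [DecidableEq a] [DecidableEq b]
    (P : Finset (a × b)) (g : a → b) (hg : ∀ i j, (i, j) ∈ P ↔ j = g i)
    (v : {e // e ∈ P} → ℂ) (x : b → ℂ) (i : a) :
    (Pattern.realize P v *ᵥ x) i = v ⟨(i, g i), (hg i (g i)).mpr rfl⟩ * x (g i) := by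
  classical
  unfold Matrix.mulVec dotProduct
  rw [Finset.sum_eq_single (g i)]
  · simp [Pattern.realize, (hg i (g i)).mpr rfl]
  · intro j _ hj
    simp [Pattern.realize, hg i j, hj]
  · simp

lemma rank_eq_card_of_injective {α β : Type*} [Fintype α] [Fintype β]
    (M : Matrix α β ℂ) (h : Function.Injective M.mulVecLin) :
    M.rank = Fintype.card β := by
  unfold Matrix.rank
  rw [LinearMap.finrank_range_of_inj h, Module.finrank_fintype_fun_eq_card]

lemma injective_of_rank_eq_card {α β : Type*} [Fintype α] [Fintype β]
    (M : Matrix α β ℂ) (h : M.rank = Fintype.card β) :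
    Function.Injective M.mulVecLin := by
  rw [← LinearMap.ker_eq_bot]
  have h2 := LinearMap.finrank_range_add_finrank_ker M.mulVecLin
  rw [Module.finrank_fintype_fun_eq_card] at h2
  unfold Matrix.rank at h
  rw [h] at h2
  have h3 : Module.finrank ℂ (LinearMap.ker M.mulVecLin) = 0 := by omega
  exact Submodule.finrank_eq_zero.mp h3

lemma mem_image_graph {α β : Type*} [DecidableEq α] [DecidableEq β] [Fintype α]
    (t : α → β) (i : α) (j : β) :
    (i, j) ∈ Finset.univ.image (fun i => (i, t i)) ↔ j = t i := by
  constructor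
  · intro h
    rw [Finset.mem_image] at h
    obtain ⟨a, -, ha⟩ := h
    injection ha with h1 h2
    subst h1; exact h2.symm
  · intro h; subst h
    exact Finset.mem_image.mpr ⟨i, Finset.mem_univ i, rfl⟩

lemma mem_aux_inl_inl {n q : ℕ} (A : Finset (Fin n × Fin n)) (B : Finset (Fin n × Fin q))
    (I : Finset (Fin n)) (i j : Fin n) :
    (Sum.inl i, Sum.inl j) ∈ auxPattern A B I ↔ ((i, j) ∈ A ∧ i ∉ I) := by
  simp [auxPattern, Prod.ext_iff]

lemma mem_aux_inl_inr {n q : ℕ} (A : Finset (Fin n × Fin n)) (B : Finset (Fin n × Fin q))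
    (I : Finset (Fin n)) (i : Fin n) (j : Fin q) :
    (Sum.inl i, Sum.inr j) ∈ auxPattern A B I ↔ (i, j) ∈ B := by
  simp [auxPattern, Prod.ext_iff]

lemma mem_aux_inr {n q : ℕ} (A : Finset (Fin n × Fin n)) (B : Finset (Fin n × Fin q))
    (I : Finset (Fin n)) (a : Fin q) (c : Fin n ⊕ Fin q) :
    (Sum.inr a, c) ∉ auxPattern A B I := by
  simp [auxPattern, Prod.ext_iff]

def auxVarMap {n q : ℕ} (A : Finset (Fin n × Fin n)) (B : Finset (Fin n × Fin q))
    (I : Finset (Fin n)) : {e // e ∈ auxPattern A B I} → ({e // e ∈ A} ⊕ {e // e ∈ B})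
  | ⟨(Sum.inl i, Sum.inl j), h⟩ => Sum.inl ⟨(i, j), ((mem_aux_inl_inl A B I i j).mp h).1⟩
  | ⟨(Sum.inl i, Sum.inr j), h⟩ => Sum.inr ⟨(i, j), (mem_aux_inl_inr A B I i j).mp h⟩
  | ⟨(Sum.inr a, c), h⟩ => absurd h (mem_aux_inr A B I a c)

def decodeVar {n q : ℕ} {A : Finset (Fin n × Fin n)} {B : Finset (Fin n × Fin q)} :
    ({e // e ∈ A} ⊕ {e // e ∈ B}) → (Fin n ⊕ Fin q) × (Fin n ⊕ Fin q)
  | Sum.inl a => (Sum.inl a.1.1, Sum.inl a.1.2)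
  | Sum.inr b => (Sum.inl b.1.1, Sum.inr b.1.2)

lemma decode_auxVarMap {n q : ℕ} (A : Finset (Fin n × Fin n)) (B : Finset (Fin n × Fin q))
    (I : Finset (Fin n)) (e : {e // e ∈ auxPattern A B I}) :
    decodeVar (auxVarMap A B I e) = e.1 := by
  obtain ⟨⟨r, c⟩, h⟩ := e
  rcases r with i | a
  · rcases c with j | j <;> rfl
  · exact absurd h (mem_aux_inr A B I a c)

lemma auxVarMap_injective {n q : ℕ} (A : Finset (Fin n × Fin n)) (B : Finset (Fin n × Fin q))
    (I : Finset (Fin n)) : Function.Injective (auxVarMap A B I) := fun e1 e2 heq =>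
  Subtype.ext (by rw [← decode_auxVarMap A B I e1, ← decode_auxVarMap A B I e2, heq])

lemma hminSet_nonempty {ι : Type*} [Fintype ι] [DecidableEq ι] (M : Finset (ι × ι)) :
    {k : ℕ | ∃ C : Finset (Fin k × ι),
      (∀ i : Fin k, ∃! j : ι, (i, j) ∈ C) ∧ IsStructObs M C}.Nonempty := by
  classical
  refine ⟨Fintype.card ι, ?_⟩
  set e : Fin (Fintype.card ι) ≃ ι := (Fintype.equivFin ι).symm with he
  refine ⟨Finset.univ.image fun i => (i, e i), fun i => ⟨e i,
    (mem_image_graph _ i (e i)).mpr rfl, fun j hj => (mem_image_graph _ i j).mp hj⟩, ?_⟩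
  set C : Finset (Fin (Fintype.card ι) × ι) := Finset.univ.image fun i => (i, e i) with hC
  refine ⟨∏ c : {e // e ∈ C}, X (Sum.inr c), ?_, ?_⟩
  · rw [Finset.prod_ne_zero_iff]
    exact fun a _ => X_ne_zero _
  · intro v hv s
    rw [eval_prod] at hv
    simp only [eval_X] at hv
    rw [Finset.prod_ne_zero_iff] at hv
    apply rank_eq_card_of_injective
    rw [← LinearMap.ker_eq_bot, LinearMap.ker_eq_bot']
    intro x hx
    rw [Matrix.mulVecLin_apply, Matrix.fromRows_mulVec] at hx
    funext i
    show x i = 0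
    have h1 := congrFun hx (Sum.inr (e.symm i))
    simp only [Sum.elim_inr, Pi.zero_apply] at h1
    rw [realize_mulVec_dedicated C e (fun i j => mem_image_graph _ i j)] at h1
    have h2 := mul_eq_zero.mp h1
    rcases h2 with h2 | h2
    · exact absurd h2 (hv _ (Finset.mem_univ _))
    · rw [e.apply_symm_apply] at h2
      exact h2

end Helpers

/-- For a structured system `(A, B)` with `q` dedicated inputs (input `j` drives state
`f j`, `f` injective), there exists a dedicated output pattern `C` on the `n` states
with at most `H(Â) + q` rows (dedicated sensors) such that `(A, B, C)` is GSIO, where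
`Â` is the auxiliary pattern. -/
theorem GSIO_upper_bound_sensor_placement (n q : ℕ)
    (A : Finset (Fin n × Fin n)) (B : Finset (Fin n × Fin q))
    (f : Fin q → Fin n) (hf : Function.Injective f)
    (hB : ∀ (i : Fin n) (j : Fin q), (i, j) ∈ B ↔ i = f j) :
    ∃ (m : ℕ) (C : Finset (Fin m × Fin n)),
      m ≤ Hmin (auxPattern A B (Finset.image f Finset.univ)) + q ∧
      (∀ i : Fin m, ∃! j : Fin n, (i, j) ∈ C) ∧ IsGSIO A B C := by
  classical
  set I : Finset (Fin n) := Finset.image f Finset.univ with hI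
  set k : ℕ := Hmin (auxPattern A B I) with hk
  have hmem : k ∈ {k : ℕ | ∃ C : Finset (Fin k × (Fin n ⊕ Fin q)),
      (∀ i : Fin k, ∃! j, (i, j) ∈ C) ∧ IsStructObs (auxPattern A B I) C} :=
    Nat.sInf_mem (hminSet_nonempty (auxPattern A B I))
  obtain ⟨C₀, hded₀, ph, hph0, hph⟩ := hmem
  have hg : ∀ (i : Fin k) (j : Fin n ⊕ Fin q), (i, j) ∈ C₀ ↔ j = (hded₀ i).choose := by
    intro i j
    constructor
    · exact fun h => (hded₀ i).choose_spec.2 j h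
    · rintro rfl; exact (hded₀ i).choose_spec.1
  set g : Fin k → Fin n ⊕ Fin q := fun i => (hded₀ i).choose with hgdef
  set π : Fin n ⊕ Fin q → Fin n := Sum.elim id f with hπ
  set t : Fin (k + q) → Fin n :=
    fun i => Sum.elim (fun a => π (g a)) f (finSumFinEquiv.symm i) with ht
  set C : Finset (Fin (k + q) × Fin n) := Finset.univ.image fun i => (i, t i) with hCdef
  have hC : ∀ i j, (i, j) ∈ C ↔ j = t i := fun i j => mem_image_graph t i j
  refine ⟨k + q, C, le_refl _,
    fun i => ⟨t i, (hC i (t i)).mpr rfl, fun j hj => (hC i j).mp hj⟩, ?_⟩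
  -- variable map
  set σC : {e // e ∈ C₀} → {e // e ∈ C} := fun c =>
    ⟨(finSumFinEquiv (Sum.inl c.1.1), t (finSumFinEquiv (Sum.inl c.1.1))),
      (hC _ _).mpr rfl⟩ with hσC
  have hσCinj : Function.Injective σC := by
    intro c1 c2 hcc
    have h1 : (finSumFinEquiv (Sum.inl c1.1.1) : Fin (k + q)) = finSumFinEquiv (Sum.inl c2.1.1) := by
      have := congrArg (fun e : {e // e ∈ C} => e.1.1) hcc
      simpa [hσC] using this
    have h2 : c1.1.1 = c2.1.1 := Sum.inl.inj (finSumFinEquiv.injective h1)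
    have e1 : c1.1.2 = g c1.1.1 := (hg c1.1.1 c1.1.2).mp (by rw [Prod.mk.eta]; exact c1.2)
    have e2 : c2.1.2 = g c2.1.1 := (hg c2.1.1 c2.1.2).mp (by rw [Prod.mk.eta]; exact c2.2)
    apply Subtype.ext
    apply Prod.ext_iff.mpr
    exact ⟨h2, e1.trans ((congrArg g h2).trans e2.symm)⟩
  set σ : ({e // e ∈ auxPattern A B I} ⊕ {e // e ∈ C₀}) →
      (({e // e ∈ A} ⊕ {e // e ∈ B}) ⊕ {e // e ∈ C}) :=
    Sum.elim (fun eh => Sum.inl (auxVarMap A B I eh)) (fun c => Sum.inr (σC c)) with hσ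
  have hσinj : Function.Injective σ := by
    rintro (a | a) (b | b) h
    · simp only [hσ, Sum.elim_inl, Sum.inl.injEq] at h
      exact congrArg Sum.inl (auxVarMap_injective A B I h)
    · simp only [hσ, Sum.elim_inl, Sum.elim_inr] at h
      exact absurd h Sum.inl_ne_inr
    · simp only [hσ, Sum.elim_inl, Sum.elim_inr] at h
      exact absurd h Sum.inr_ne_inl
    · simp only [hσ, Sum.elim_inr, Sum.inr.injEq] at h
      exact congrArg Sum.inr (hσCinj h)
  refine ⟨MvPolynomial.rename σ ph *
      ((∏ e : {e // e ∈ B}, X (Sum.inl (Sum.inr e))) * (∏ e : {e // e ∈ C}, X (Sum.inr e))),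
      ?_, ?_⟩
  · apply mul_ne_zero
    · exact fun h => hph0 (MvPolynomial.rename_injective σ hσinj (by rw [h, map_zero]))
    · apply mul_ne_zero <;>
        exact Finset.prod_ne_zero_iff.mpr fun a _ => X_ne_zero _
  intro v hv s
  rw [_root_.map_mul, _root_.map_mul] at hv
  have hv1 : eval (v ∘ σ) ph ≠ 0 := by
    have h := left_ne_zero_of_mul hv
    rwa [eval_rename] at h
  have hvB : ∀ e : {e // e ∈ B}, v (Sum.inl (Sum.inr e)) ≠ 0 := by
    have h := left_ne_zero_of_mul (right_ne_zero_of_mul hv)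
    rw [eval_prod] at h
    simp only [eval_X] at h
    rw [Finset.prod_ne_zero_iff] at h
    exact fun e => h e (Finset.mem_univ e)
  have hvC : ∀ e : {e // e ∈ C}, v (Sum.inr e) ≠ 0 := by
    have h := right_ne_zero_of_mul (right_ne_zero_of_mul hv)
    rw [eval_prod] at h
    simp only [eval_X] at h
    rw [Finset.prod_ne_zero_iff] at h
    exact fun e => h e (Finset.mem_univ e)
  rw [show n + q = Fintype.card (Fin n ⊕ Fin q) by simp]
  apply rank_eq_card_of_injective
  rw [← LinearMap.ker_eq_bot, LinearMap.ker_eq_bot']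
  intro z hz
  rw [Matrix.mulVecLin_apply, Matrix.fromBlocks_mulVec] at hz
  set x : Fin n → ℂ := z ∘ Sum.inl with hx
  set u : Fin q → ℂ := z ∘ Sum.inr with hu
  have hE1 : ∀ i, ((Pattern.realize A (fun e => v (Sum.inl (Sum.inl e))) -
      s • (1 : Matrix (Fin n) (Fin n) ℂ)) *ᵥ x) i +
      (Pattern.realize B (fun e => v (Sum.inl (Sum.inr e))) *ᵥ u) i = 0 := by
    intro i
    have h := congrFun hz (Sum.inl i)
    simpa using h
  have hE2 : ∀ i, (Pattern.realize C (fun e => v (Sum.inr e)) *ᵥ x) i = 0 := by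
    intro i
    have h := congrFun hz (Sum.inr i)
    simpa [Matrix.zero_mulVec] using h
  have hxt : ∀ i : Fin (k + q), x (t i) = 0 := by
    intro i
    have h := hE2 i
    rw [realize_mulVec_dedicated C t hC] at h
    rcases mul_eq_zero.mp h with h | h
    · exact absurd h (hvC _)
    · exact h
  have hxf : ∀ j : Fin q, x (f j) = 0 := by
    intro j
    have h := hxt (finSumFinEquiv (Sum.inr j))
    simpa [ht, Equiv.symm_apply_apply] using h
  have hxg : ∀ i : Fin k, x (π (g i)) = 0 := by
    intro i
    have h := hxt (finSumFinEquiv (Sum.inl i))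
    simpa [ht, Equiv.symm_apply_apply] using h
  have hBrow : ∀ i, i ∉ I →
      (Pattern.realize B (fun e => v (Sum.inl (Sum.inr e))) *ᵥ u) i = 0 := by
    intro i hi
    unfold Matrix.mulVec dotProduct
    apply Finset.sum_eq_zero
    intro j _
    have hnot : (i, j) ∉ B := by
      intro hmm
      apply hi
      rw [hI]
      exact Finset.mem_image.mpr ⟨j, Finset.mem_univ j, ((hB i j).mp hmm).symm⟩
    simp [Pattern.realize, hnot]
  -- entries of the auxiliary realization
  have hAuxA : ∀ (i j : Fin n),
      Pattern.realize (auxPattern A B I) (fun e => (v ∘ σ) (Sum.inl e)) (Sum.inl i) (Sum.inl j)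
        = if i ∈ I then 0 else Pattern.realize A (fun e => v (Sum.inl (Sum.inl e))) i j := by
    intro i j
    by_cases hiI : i ∈ I
    · rw [if_pos hiI]
      have hnm : (Sum.inl i, Sum.inl j) ∉ auxPattern A B I :=
        fun h => ((mem_aux_inl_inl A B I i j).mp h).2 hiI
      simp [Pattern.realize, hnm]
    · rw [if_neg hiI]
      by_cases hij : (i, j) ∈ A
      · have hm : (Sum.inl i, Sum.inl j) ∈ auxPattern A B I :=
          (mem_aux_inl_inl A B I i j).mpr ⟨hij, hiI⟩
        simp only [Pattern.realize, Matrix.of_apply, dif_pos hm, dif_pos hij]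
        rfl
      · have hnm : (Sum.inl i, Sum.inl j) ∉ auxPattern A B I :=
          fun h => hij ((mem_aux_inl_inl A B I i j).mp h).1
        simp [Pattern.realize, hnm, hij]
  have hAuxB : ∀ (i : Fin n) (j : Fin q),
      Pattern.realize (auxPattern A B I) (fun e => (v ∘ σ) (Sum.inl e)) (Sum.inl i) (Sum.inr j)
        = Pattern.realize B (fun e => v (Sum.inl (Sum.inr e))) i j := by
    intro i j
    by_cases hij : (i, j) ∈ B
    · have hm : (Sum.inl i, Sum.inr j) ∈ auxPattern A B I := (mem_aux_inl_inr A B I i j).mpr hij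
      simp only [Pattern.realize, Matrix.of_apply, dif_pos hm, dif_pos hij]
      rfl
    · have hnm : (Sum.inl i, Sum.inr j) ∉ auxPattern A B I :=
        fun h => hij ((mem_aux_inl_inr A B I i j).mp h)
      simp [Pattern.realize, hnm, hij]
  have hAuxr : ∀ (a : Fin q) (c : Fin n ⊕ Fin q),
      Pattern.realize (auxPattern A B I) (fun e => (v ∘ σ) (Sum.inl e)) (Sum.inr a) c = 0 := by
    intro a c
    simp [Pattern.realize, mem_aux_inr A B I a c]
  set w : Fin n ⊕ Fin q → ℂ := Sum.elim x (fun _ => 0) with hw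
  have hOinj := injective_of_rank_eq_card _ (hph (v ∘ σ) hv1 s)
  have hOw : (Matrix.fromRows
      (Pattern.realize (auxPattern A B I) (fun e => (v ∘ σ) (Sum.inl e)) -
        s • (1 : Matrix (Fin n ⊕ Fin q) (Fin n ⊕ Fin q) ℂ))
      (Pattern.realize C₀ (fun e => (v ∘ σ) (Sum.inr e)))).mulVecLin w = 0 := by
    rw [Matrix.mulVecLin_apply, Matrix.fromRows_mulVec]
    funext r
    rcases r with c | i
    · simp only [Sum.elim_inl, Pi.zero_apply, Matrix.sub_mulVec, Pi.sub_apply,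
        Matrix.smul_mulVec, Matrix.one_mulVec, Pi.smul_apply, smul_eq_mul]
      rcases c with i | a
      · have hrow : (Pattern.realize (auxPattern A B I) (fun e => (v ∘ σ) (Sum.inl e)) *ᵥ w)
            (Sum.inl i) = if i ∈ I then 0
              else (Pattern.realize A (fun e => v (Sum.inl (Sum.inl e))) *ᵥ x) i := by
          unfold Matrix.mulVec dotProduct
          rw [Fintype.sum_sum_type]
          have h2 : ∑ j : Fin q,
              Pattern.realize (auxPattern A B I) (fun e => (v ∘ σ) (Sum.inl e))
                (Sum.inl i) (Sum.inr j) * w (Sum.inr j) = 0 := by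
            apply Finset.sum_eq_zero
            intro j _
            simp [hw]
          rw [h2, add_zero]
          by_cases hiI : i ∈ I
          · rw [if_pos hiI]
            apply Finset.sum_eq_zero
            intro j _
            simp only [hAuxA i j, if_pos hiI, zero_mul]
          · rw [if_neg hiI]
            apply Finset.sum_congr rfl
            intro j _
            simp only [hAuxA i j, if_neg hiI]
            rfl
        rw [hrow]
        by_cases hiI : i ∈ I
        · rw [if_pos hiI]
          have hxi : x i = 0 := by
            rw [hI] at hiI
            obtain ⟨j₀, -, hj₀⟩ := Finset.mem_image.mp hiI
            rw [← hj₀]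
            exact hxf j₀
          have hwi : w (Sum.inl i) = x i := rfl
          rw [hwi, hxi, mul_zero, sub_zero]
        · rw [if_neg hiI]
          have h := hE1 i
          rw [hBrow i hiI, add_zero, Matrix.sub_mulVec, Pi.sub_apply,
            Matrix.smul_mulVec, Matrix.one_mulVec] at h
          have hwi : w (Sum.inl i) = x i := rfl
          rw [hwi]
          simpa using h
      · have hrow : (Pattern.realize (auxPattern A B I) (fun e => (v ∘ σ) (Sum.inl e)) *ᵥ w)
            (Sum.inr a) = 0 := by
          unfold Matrix.mulVec dotProduct
          apply Finset.sum_eq_zero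
          intro c _
          simp only [hAuxr a c, zero_mul]
        rw [hrow]
        have hwa : w (Sum.inr a) = 0 := rfl
        rw [hwa, mul_zero, sub_zero]
    · simp only [Sum.elim_inr, Pi.zero_apply]
      rw [realize_mulVec_dedicated C₀ g hg]
      have hwg : w (g i) = 0 := by
        rcases hgi : g i with x₀ | j
        · have h := hxg i
          rw [hgi] at h
          simpa [hπ, hw] using h
        · simp [hw]
      rw [hwg, mul_zero]
  have hw0 : w = 0 := hOinj (hOw.trans (map_zero _).symm)
  have hx0 : ∀ i, x i = 0 := by
    intro i
    have h := congrFun hw0 (Sum.inl i)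
    simpa [hw] using h
  have hu0 : ∀ j, u j = 0 := by
    intro j
    have h1 := hE1 (f j)
    have h2 : ((Pattern.realize A (fun e => v (Sum.inl (Sum.inl e))) -
        s • (1 : Matrix (Fin n) (Fin n) ℂ)) *ᵥ x) (f j) = 0 := by
      have hxz : x = 0 := funext hx0
      rw [hxz, Matrix.mulVec_zero]
      rfl
    rw [h2, zero_add] at h1
    have h3 : (Pattern.realize B (fun e => v (Sum.inl (Sum.inr e))) *ᵥ u) (f j)
        = v (Sum.inl (Sum.inr ⟨(f j, j), (hB (f j) j).mpr rfl⟩)) * u j := by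
      unfold Matrix.mulVec dotProduct
      rw [Finset.sum_eq_single j]
      · simp [Pattern.realize, (hB (f j) j).mpr rfl]
      · intro j' _ hj'
        have hnot : (f j, j') ∉ B := by
          intro hmm
          exact hj' (hf ((hB (f j) j').mp hmm).symm)
        simp [Pattern.realize, hnot]
      · simp
    rw [h3] at h1
    rcases mul_eq_zero.mp h1 with h | h
    · exact absurd h (hvB _)
    · exact h
  funext r
  rcases r with i | j
  · exact hx0 i
  · exact hu0 j
end

section
/- Let V be a finite set and r a binary relation on V (the edge relation of a finite directed graph). Suppose Y ⊆ V has minimum cardinality among all sets Y′ ⊆ V such that every vertex of V reaches some element of Y′. Then the cardinality of Y equals the number of sink strongly connected components of the digraph, Y contains exactly one vertex from each sink strongly connected component, and every element of Y belongs to a sink strongly connected component. -/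
open Relation

section Aux
variable {V : Type*} [Fintype V] [DecidableEq V] {r : V → V → Prop}

private lemma exists_sink_reach (r : V → V → Prop) (v : V) :
    ∃ w : V, ReflTransGen r v w ∧
      (∀ u : V, ReflTransGen r w u → ReflTransGen r u w) := by
  classical
  set f : V → ℕ := fun w => (Finset.univ.filter (fun u => ReflTransGen r w u)).card with hf
  set S : Finset V := Finset.univ.filter (fun w => ReflTransGen r v w) with hS
  have hne : S.Nonempty := ⟨v, by simp [hS]; exact ReflTransGen.refl⟩
  obtain ⟨w, hwS, hwmin⟩ := S.exists_min_image f hne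
  have hvw : ReflTransGen r v w := by simpa [hS] using hwS
  refine ⟨w, hvw, fun u hwu => ?_⟩
  have huS : u ∈ S := by simp [hS]; exact hvw.trans hwu
  have hsub : (Finset.univ.filter (fun x => ReflTransGen r u x)) ⊆
      (Finset.univ.filter (fun x => ReflTransGen r w x)) := by
    intro x hx
    simp only [Finset.mem_filter, Finset.mem_univ, true_and] at hx ⊢
    exact hwu.trans hx
  have hcard : (Finset.univ.filter (fun x => ReflTransGen r w x)).card ≤
      (Finset.univ.filter (fun x => ReflTransGen r u x)).card := hwmin u huS
  have heq := Finset.eq_of_subset_of_card_le hsub hcard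
  have : w ∈ Finset.univ.filter (fun x => ReflTransGen r u x) := by
    rw [heq]; simp; exact ReflTransGen.refl
  simpa using this

private lemma scc_eq {v1 v2 y : V}
    (h1 : ReflTransGen r v1 y ∧ ReflTransGen r y v1)
    (h2 : ReflTransGen r v2 y ∧ ReflTransGen r y v2) :
    {w : V | ReflTransGen r v1 w ∧ ReflTransGen r w v1} =
    {w : V | ReflTransGen r v2 w ∧ ReflTransGen r w v2} := by
  ext w
  constructor <;> rintro ⟨a, b⟩
  · exact ⟨(h2.1.trans h1.2).trans a, b.trans h1.1 |>.trans h2.2⟩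
  · exact ⟨(h1.1.trans h2.2).trans a, b.trans h2.1 |>.trans h1.2⟩

end Aux

/-- If `Y` has minimum cardinality among all subsets of a finite digraph that every
vertex can reach, then `card Y` equals the number of sink strongly connected
components, `Y` contains exactly one vertex from each sink strongly connected
component, and every element of `Y` belongs to a sink strongly connected component. -/
theorem minimum_reach_cover_is_sink_SCC_transversal (V : Type*) [Fintype V]
    [DecidableEq V] (r : V → V → Prop) (Y : Finset V)
    (hY : ∀ v : V, ∃ y ∈ Y, Relation.ReflTransGen r v y)
    (hmin : ∀ Y' : Finset V, (∀ v : V, ∃ y ∈ Y', Relation.ReflTransGen r v y) →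
      Y.card ≤ Y'.card) :
    Y.card = Nat.card {C : Set V // ∃ v : V,
        (∀ w : V, Relation.ReflTransGen r v w → Relation.ReflTransGen r w v) ∧
        C = {w : V | Relation.ReflTransGen r v w ∧ Relation.ReflTransGen r w v}} ∧
      (∀ v : V, (∀ w : V, Relation.ReflTransGen r v w → Relation.ReflTransGen r w v) →
        ∃! y : V, y ∈ Y ∧ Relation.ReflTransGen r v y ∧ Relation.ReflTransGen r y v) ∧
      (∀ y ∈ Y, ∀ w : V, Relation.ReflTransGen r y w → Relation.ReflTransGen r w y) := by
  classical
  -- uniqueness of a cover element per sink SCC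
  have huniq : ∀ v y1 y2 : V, y1 ∈ Y → y2 ∈ Y →
      (ReflTransGen r v y1 ∧ ReflTransGen r y1 v) →
      (ReflTransGen r v y2 ∧ ReflTransGen r y2 v) → y1 = y2 := by
    intro v y1 y2 h1 h2 m1 m2
    by_contra hne
    have hcov : ∀ u : V, ∃ y ∈ Y.erase y1, ReflTransGen r u y := by
      intro u
      obtain ⟨y, hy, hr⟩ := hY u
      by_cases hyy : y = y1
      · subst hyy
        exact ⟨y2, Finset.mem_erase.mpr ⟨fun h => hne h.symm, h2⟩,
          hr.trans (m1.2.trans m2.1)⟩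
      · exact ⟨y, Finset.mem_erase.mpr ⟨hyy, hy⟩, hr⟩
    have := hmin (Y.erase y1) hcov
    have hc := Finset.card_erase_of_mem h1
    have hpos : 0 < Y.card := Finset.card_pos.mpr ⟨y1, h1⟩
    omega
  -- existence of a cover element per sink SCC
  have hex : ∀ v : V, (∀ w : V, ReflTransGen r v w → ReflTransGen r w v) →
      ∃ y ∈ Y, ReflTransGen r v y ∧ ReflTransGen r y v := by
    intro v hv
    obtain ⟨y, hy, hr⟩ := hY v
    exact ⟨y, hy, hr, hv y hr⟩
  set P : Set V → Prop := fun C => ∃ v : V,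
      (∀ w : V, Relation.ReflTransGen r v w → Relation.ReflTransGen r w v) ∧
      C = {w : V | Relation.ReflTransGen r v w ∧ Relation.ReflTransGen r w v} with hP
  have : Finite {C : Set V // P C} := Subtype.finite
  have FT : Fintype {C : Set V // P C} := Fintype.ofFinite _
  -- representative of each sink SCC
  set rep : {C : Set V // P C} → V := fun C => C.2.choose with hrep
  have hrepspec : ∀ C : {C : Set V // P C},
      (∀ w : V, ReflTransGen r (rep C) w → ReflTransGen r w (rep C)) ∧
      C.1 = {w : V | ReflTransGen r (rep C) w ∧ ReflTransGen r w (rep C)} :=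
    fun C => C.2.choose_spec
  -- the transversal via reps is a cover
  have hTcov : ∀ u : V, ∃ y ∈ Finset.image rep Finset.univ, ReflTransGen r u y := by
    intro u
    obtain ⟨w, huw, hw⟩ := exists_sink_reach r u
    set C : {C : Set V // P C} :=
      ⟨{x | ReflTransGen r w x ∧ ReflTransGen r x w}, ⟨w, hw, rfl⟩⟩ with hC
    have hrC : rep C ∈ C.1 := by
      rw [(hrepspec C).2]
      exact ⟨ReflTransGen.refl, ReflTransGen.refl⟩
    have : ReflTransGen r w (rep C) := hrC.1
    exact ⟨rep C, Finset.mem_image.mpr ⟨C, Finset.mem_univ _, rfl⟩, huw.trans this⟩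
  have hub : Y.card ≤ Fintype.card {C : Set V // P C} := by
    calc Y.card ≤ (Finset.image rep Finset.univ).card := hmin _ hTcov
    _ ≤ Finset.univ.card := Finset.card_image_le
    _ = Fintype.card {C : Set V // P C} := Finset.card_univ
  -- injection from sink SCCs into Y
  set g : {C : Set V // P C} → {y : V // y ∈ Y} := fun C =>
    ⟨(hex (rep C) (hrepspec C).1).choose, (hex (rep C) (hrepspec C).1).choose_spec.1⟩
    with hg
  have hgspec : ∀ C, ReflTransGen r (rep C) (g C).1 ∧ ReflTransGen r (g C).1 (rep C) :=
    fun C => (hex (rep C) (hrepspec C).1).choose_spec.2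
  have hgmem : ∀ C : {C : Set V // P C}, (g C).1 ∈ C.1 := by
    intro C
    rw [(hrepspec C).2]
    exact hgspec C
  have hginj : Function.Injective g := by
    intro C1 C2 h
    have h1 := hgspec C1
    have h2 := hgspec C2
    rw [h] at h1
    apply Subtype.ext
    rw [(hrepspec C1).2, (hrepspec C2).2]
    exact scc_eq h1 h2
  have hlb : Fintype.card {C : Set V // P C} ≤ Y.card := by
    have := Fintype.card_le_of_injective g hginj
    simpa [Fintype.card_coe] using this
  have hcard : Y.card = Fintype.card {C : Set V // P C} := le_antisymm hub hlb
  -- g is bijective, hence every y ∈ Y lies in a sink SCC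
  have hgbij : Function.Bijective g := by
    rw [Nat.bijective_iff_injective_and_card]
    constructor
    · exact hginj
    · rw [Nat.card_eq_fintype_card, Nat.card_eq_fintype_card, Fintype.card_coe, hcard]
  refine ⟨by rw [hcard, Nat.card_eq_fintype_card], ?_, ?_⟩
  · intro v hv
    obtain ⟨y, hy, hr1, hr2⟩ := hex v hv
    exact ⟨y, ⟨hy, hr1, hr2⟩, fun y' ⟨hy', hr1', hr2'⟩ => huniq v y' y hy' hy ⟨hr1', hr2'⟩ ⟨hr1, hr2⟩⟩
  · intro y hy w hyw
    obtain ⟨C, hC⟩ := hgbij.2 ⟨y, hy⟩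
    have hmemC : y ∈ C.1 := by have := hgmem C; rw [hC] at this; exact this
    rw [(hrepspec C).2] at hmemC
    have hsink := (hrepspec C).1
    -- y is mutual with rep C, which is a sink vertex
    have : ReflTransGen r (rep C) w := hmemC.1.trans hyw
    exact (hsink w this).trans hmemC.1
end
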